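/- Let θ be an n×n non-negative matrix with perm(θ) > 0. Then perm(θ)/perm_{B,2}(θ) = (Σ_{σ_1,σ_2 ∈ S_n} p_θ(σ_1)·p_θ(σ_2)·2^{−c(σ_1,σ_2)})^{−1/2}, where p_θ(σ) = Π_i θ(i,σ(i)) / perm(θ), c(σ_1,σ_2) is the number of cycles of length > 1 of σ_1 ∘ σ_2^{-1}, and perm_{B,2}(θ)^2 = Σ_{γ ∈ Γ_{2,n}} θ^{2γ}·C^B_2(γ). -/

import Mathlib

open scoped BigOperators

/-- The permanent of an `n × n` real matrix. -/
noncomputable def perm {n : ℕ} (γ : Matrix (Fin n) (Fin n) ℝ) : ℝ :=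
  ∑ σ : Equiv.Perm (Fin n), ∏ i, γ i (σ i)

/-- Doubly stochastic: non-negative entries, row sums and column sums equal 1. -/
def IsDoublyStochastic {n : ℕ} (γ : Matrix (Fin n) (Fin n) ℝ) : Prop :=
  (∀ i j, 0 ≤ γ i j) ∧ (∀ i, ∑ j, γ i j = 1) ∧ (∀ j, ∑ i, γ i j = 1)

/-- The permutation matrix associated with `σ`. -/
def Pmat {n : ℕ} (σ : Equiv.Perm (Fin n)) : Matrix (Fin n) (Fin n) ℝ :=
  fun i j => if σ i = j then 1 else 0

/-- `γ ∈ Γ_{M,n}`: doubly stochastic with all entries integer multiples of `1/M`. -/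
def MemGamma {n : ℕ} (M : ℕ) (γ : Matrix (Fin n) (Fin n) ℝ) : Prop :=
  IsDoublyStochastic γ ∧ ∀ i j, ∃ k : ℕ, γ i j = (k : ℝ) / M

/-- `C_M(γ)`: the number of `M`-tuples of permutations whose permutation matrices
average to `γ`. -/
noncomputable def CM {n : ℕ} (M : ℕ) (γ : Matrix (Fin n) (Fin n) ℝ) : ℕ :=
  Nat.card {σs : Fin M → Equiv.Perm (Fin n) // γ = (M : ℝ)⁻¹ • ∑ m, Pmat (σs m)}

/-- `θ^{M·γ} = ∏_{i,j} θ(i,j)^{M·γ(i,j)}` (the exponents are natural numbers for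
`γ ∈ Γ_{M,n}`). -/
noncomputable def matPow {n : ℕ} (M : ℕ) (θ γ : Matrix (Fin n) (Fin n) ℝ) : ℝ :=
  ∏ i, ∏ j, θ i j ^ (⌊(M : ℝ) * γ i j⌋₊)

/-- `C^B_M(γ) = (M!)^{2n−n²} · ∏_{i,j} (M − M·γ(i,j))! / (M·γ(i,j))!`. -/
noncomputable def CB {n : ℕ} (M : ℕ) (γ : Matrix (Fin n) (Fin n) ℝ) : ℝ :=
  (M.factorial : ℝ) ^ (2 * (n : ℤ) - (n : ℤ) ^ 2) *
    ∏ i, ∏ j, ((M - ⌊(M : ℝ) * γ i j⌋₊).factorial : ℝ) / ((⌊(M : ℝ) * γ i j⌋₊).factorial : ℝ)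

/-- The probability mass function on permutations induced by `θ`. -/
noncomputable def pTheta {n : ℕ} (θ : Matrix (Fin n) (Fin n) ℝ)
    (σ : Equiv.Perm (Fin n)) : ℝ :=
  (∏ i, θ i (σ i)) / perm θ

namespace BetheAux
open Equiv Equiv.Perm Finset
open scoped Classical

variable {n : ℕ}

/-- average of two permutation matrices -/
noncomputable def fmat (p : Equiv.Perm (Fin n) × Equiv.Perm (Fin n)) :
    Matrix (Fin n) (Fin n) ℝ :=
  (2:ℝ)⁻¹ • (Pmat p.1 + Pmat p.2)

lemma fmat_apply (p : Equiv.Perm (Fin n) × Equiv.Perm (Fin n)) (i j : Fin n) :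
    fmat p i j = ((if p.1 i = j then (1:ℝ) else 0) + if p.2 i = j then 1 else 0) / 2 := by
  simp only [fmat, Matrix.smul_apply, Matrix.add_apply, Pmat, smul_eq_mul]
  ring

lemma floor_two_fmat (p : Equiv.Perm (Fin n) × Equiv.Perm (Fin n)) (i j : Fin n) :
    ⌊((2:ℕ):ℝ) * fmat p i j⌋₊ = (if p.1 i = j then 1 else 0) + (if p.2 i = j then 1 else 0) := by
  rw [fmat_apply]
  split_ifs <;> norm_num

lemma matPow_fmat (θ : Matrix (Fin n) (Fin n) ℝ) (p : Equiv.Perm (Fin n) × Equiv.Perm (Fin n)) :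
    matPow 2 θ (fmat p) = (∏ i, θ i (p.1 i)) * ∏ i, θ i (p.2 i) := by
  unfold matPow
  rw [← Finset.prod_mul_distrib]
  refine Finset.prod_congr rfl fun i _ => ?_
  calc ∏ j, θ i j ^ ⌊((2:ℕ):ℝ) * fmat p i j⌋₊
      = ∏ j, (if p.1 i = j then θ i j else 1) * (if p.2 i = j then θ i j else 1) := by
        refine Finset.prod_congr rfl fun j _ => ?_
        rw [floor_two_fmat, pow_add]
        split_ifs <;> simp
    _ = _ := by rw [Finset.prod_mul_distrib]; simp

lemma prod_zpow_sum {ι : Type*} (s : Finset ι) (F : ι → ℤ) :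
    ∏ i ∈ s, (2:ℝ) ^ F i = (2:ℝ) ^ (∑ i ∈ s, F i) := by
  induction s using Finset.cons_induction with
  | empty => simp
  | cons a s ha ih =>
      rw [Finset.prod_cons, Finset.sum_cons, ih, zpow_add₀ (by norm_num : (2:ℝ) ≠ 0)]

lemma CB_fmat (p : Equiv.Perm (Fin n) × Equiv.Perm (Fin n)) : CB 2 (fmat p) = 1 := by
  unfold CB
  have key : ∀ i j : Fin n,
      (((2 - ⌊((2:ℕ):ℝ) * fmat p i j⌋₊).factorial : ℝ) / ((⌊((2:ℕ):ℝ) * fmat p i j⌋₊).factorial : ℝ))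
      = (2:ℝ) ^ ((1:ℤ) - (((if p.1 i = j then 1 else 0) + (if p.2 i = j then 1 else 0) : ℕ) : ℤ)) := by
    intro i j
    rw [floor_two_fmat]
    split_ifs <;> norm_num [Nat.factorial]
  have hprod : (∏ i, ∏ j, (((2 - ⌊((2:ℕ):ℝ) * fmat p i j⌋₊).factorial : ℝ) / ((⌊((2:ℕ):ℝ) * fmat p i j⌋₊).factorial : ℝ)))
      = (2:ℝ) ^ ((n:ℤ)^2 - 2 * n) := by
    calc (∏ i, ∏ j : Fin n, (((2 - ⌊((2:ℕ):ℝ) * fmat p i j⌋₊).factorial : ℝ) / ((⌊((2:ℕ):ℝ) * fmat p i j⌋₊).factorial : ℝ)))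
        = ∏ i, ∏ j : Fin n, (2:ℝ) ^ ((1:ℤ) - (((if p.1 i = j then 1 else 0) + (if p.2 i = j then 1 else 0) : ℕ) : ℤ)) := by
          exact Finset.prod_congr rfl fun i _ => Finset.prod_congr rfl fun j _ => key i j
      _ = ∏ i : Fin n, (2:ℝ) ^ (∑ j : Fin n, ((1:ℤ) - (((if p.1 i = j then 1 else 0) + (if p.2 i = j then 1 else 0) : ℕ) : ℤ))) := by
          exact Finset.prod_congr rfl fun i _ => prod_zpow_sum _ _
      _ = ∏ i : Fin n, (2:ℝ) ^ ((n:ℤ) - 2) := by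
          refine Finset.prod_congr rfl fun i _ => ?_
          congr 1
          have h1 : (∑ j : Fin n, (if p.1 i = j then (1:ℤ) else 0)) = 1 := by simp
          have h2 : (∑ j : Fin n, (if p.2 i = j then (1:ℤ) else 0)) = 1 := by simp
          push_cast
          rw [Finset.sum_sub_distrib]
          rw [Finset.sum_add_distrib, h1, h2]
          simp [mul_comm]
      _ = (2:ℝ) ^ ((n:ℤ)^2 - 2*n) := by
          rw [Finset.prod_const, ← zpow_natCast ((2:ℝ) ^ ((n:ℤ) - 2)), ← zpow_mul]
          congr 1
          simp [Finset.card_univ]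
          ring
  rw [hprod]
  rw [show ((Nat.factorial 2 : ℕ) : ℝ) = 2 by norm_num [Nat.factorial]]
  rw [← zpow_add₀ (by norm_num : (2:ℝ) ≠ 0)]
  norm_num

end BetheAux

namespace BetheAux
open Equiv Equiv.Perm Finset
open scoped Classical

variable {n : ℕ}

lemma zpow_mem_iff {ζ : Equiv.Perm (Fin n)} {B : Set (Fin n)}
    (hB : ∀ a, a ∈ B ↔ ζ a ∈ B) :
    ∀ (k : ℤ) (a : Fin n), a ∈ B ↔ (ζ ^ k) a ∈ B := by
  have hnat : ∀ (m : ℕ) (a : Fin n), a ∈ B ↔ (ζ ^ m) a ∈ B := by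
    intro m
    induction m with
    | zero => simp
    | succ m ih =>
        intro a
        rw [pow_succ, Equiv.Perm.mul_apply, hB a]
        exact ih (ζ a)
  intro k a
  cases k with
  | ofNat m => exact hnat m a
  | negSucc m =>
      rw [zpow_negSucc]
      constructor
      · intro ha
        by_contra hc
        have := (hnat (m+1) ((ζ ^ (m+1))⁻¹ a)).mpr (by simpa using ha)
        exact hc this
      · intro ha
        have := (hnat (m+1) ((ζ ^ (m+1))⁻¹ a)).mp ha
        simpa using this

lemma support_subset_of_invariant {ζ c : Equiv.Perm (Fin n)} (hc : c ∈ ζ.cycleFactorsFinset)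
    {B : Set (Fin n)} (hB : ∀ a, a ∈ B ↔ ζ a ∈ B) {a : Fin n} (ha : a ∈ c.support)
    (haB : a ∈ B) : ∀ b ∈ c.support, b ∈ B := by
  intro b hb
  have hc' := Equiv.Perm.cycle_is_cycleOf ha hc
  rw [hc', Equiv.Perm.mem_support_cycleOf_iff] at hb
  obtain ⟨⟨k, hk⟩, -⟩ := hb
  rw [← hk]
  exact (zpow_mem_iff hB k a).mp haB

lemma mem_support_factor_iff {ζ c : Equiv.Perm (Fin n)} (hc : c ∈ ζ.cycleFactorsFinset)
    (a : Fin n) : a ∈ c.support ↔ ζ a ∈ c.support := by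
  obtain ⟨hcyc, hsup⟩ := Equiv.Perm.mem_cycleFactorsFinset_iff.mp hc
  constructor
  · intro ha
    rw [← hsup a ha]
    rwa [Equiv.Perm.apply_mem_support]
  · intro ha
    have h1 : c⁻¹ (ζ a) ∈ c.support := by
      rw [← Equiv.Perm.apply_mem_support (f := c), Equiv.Perm.coe_inv, Equiv.apply_symm_apply]
      exact ha
    have h2 := hsup _ h1
    rw [Equiv.Perm.coe_inv, Equiv.apply_symm_apply] at h2
    have h3 : a = c⁻¹ (ζ a) := ζ.injective h2
    rw [h3]
    exact h1

lemma cycleFactors_card_le_swap {ζ ζ' : Equiv.Perm (Fin n)} {B : Set (Fin n)}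
    (hB : ∀ a, a ∈ B ↔ ζ a ∈ B)
    (h1 : ∀ a ∈ B, ζ' a = ζ⁻¹ a) (h2 : ∀ a, a ∉ B → ζ' a = ζ a) :
    ζ.cycleFactorsFinset.card ≤ ζ'.cycleFactorsFinset.card := by
  classical
  set g : Equiv.Perm (Fin n) → Equiv.Perm (Fin n) :=
    fun c => if ∀ a ∈ c.support, a ∈ B then c⁻¹ else c with hg
  have hsupp : ∀ c, (g c).support = c.support := by
    intro c
    show (if ∀ a ∈ c.support, a ∈ B then c⁻¹ else c).support = c.support
    split_ifs <;> simp
  apply Finset.card_le_card_of_injOn g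
  · intro c hc
    obtain ⟨hcyc, hsup⟩ := Equiv.Perm.mem_cycleFactorsFinset_iff.mp hc
    show (if ∀ a ∈ c.support, a ∈ B then c⁻¹ else c) ∈ ζ'.cycleFactorsFinset
    by_cases hsub : ∀ a ∈ c.support, a ∈ B
    · rw [if_pos hsub, Equiv.Perm.mem_cycleFactorsFinset_iff]
      refine ⟨hcyc.inv, ?_⟩
      intro a ha
      rw [Equiv.Perm.support_inv] at ha
      rw [h1 a (hsub a ha)]
      have hmem : c⁻¹ a ∈ c.support := by
        rw [← Equiv.Perm.apply_mem_support (f := c), Equiv.Perm.coe_inv, Equiv.apply_symm_apply]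
        exact ha
      have := hsup _ hmem
      rw [Equiv.Perm.coe_inv, Equiv.apply_symm_apply] at this
      exact (Equiv.Perm.inv_eq_iff_eq.mpr this).symm
    · rw [if_neg hsub, Equiv.Perm.mem_cycleFactorsFinset_iff]
      refine ⟨hcyc, fun a ha => ?_⟩
      have hnotB : a ∉ B := by
        intro haB
        exact hsub (support_subset_of_invariant hc hB ha haB)
      rw [h2 a hnotB]
      exact hsup a ha
  · intro c1 hc1 c2 hc2 heq
    have hs : c1.support = c2.support := by
      rw [← hsupp c1, ← hsupp c2, heq]
    have hc1' := Equiv.Perm.mem_cycleFactorsFinset_iff.mp (by exact hc1)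
    have hne : c1.support.Nonempty := by
      rcases hc1'.1 with ⟨a, ha, -⟩
      exact ⟨a, Equiv.Perm.mem_support.mpr ha⟩
    obtain ⟨a, ha⟩ := hne
    have e1 : c1 = ζ.cycleOf a := Equiv.Perm.cycle_is_cycleOf ha (by exact hc1)
    have e2 : c2 = ζ.cycleOf a := Equiv.Perm.cycle_is_cycleOf (hs ▸ ha) (by exact hc2)
    rw [e1, e2]

lemma cycleType_card_swap {ζ ζ' : Equiv.Perm (Fin n)} {B : Set (Fin n)}
    (hB : ∀ a, a ∈ B ↔ ζ a ∈ B)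
    (h1 : ∀ a ∈ B, ζ' a = ζ⁻¹ a) (h2 : ∀ a, a ∉ B → ζ' a = ζ a) :
    Multiset.card ζ'.cycleType = Multiset.card ζ.cycleType := by
  have hBinv : ∀ a : Fin n, a ∈ B ↔ ζ⁻¹ a ∈ B := by
    intro a
    conv_lhs => rw [show a = ζ (ζ⁻¹ a) by simp]
    exact (hB (ζ⁻¹ a)).symm
  have hB' : ∀ a : Fin n, a ∈ B ↔ ζ' a ∈ B := by
    intro a
    constructor
    · intro ha
      rw [h1 a ha]
      exact (hBinv a).mp ha
    · intro ha
      by_contra hc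
      rw [h2 a hc] at ha
      exact hc ((hB a).mpr ha)
  have h1' : ∀ a ∈ B, ζ a = ζ'⁻¹ a := by
    intro a ha
    have : ζ' (ζ a) = a := by
      rw [h1 (ζ a) ((hB a).mp ha)]
      simp
    exact (Equiv.Perm.inv_eq_iff_eq.mpr this.symm).symm
  have h2' : ∀ a : Fin n, a ∉ B → ζ a = ζ' a := fun a ha => (h2 a ha).symm
  simp only [Equiv.Perm.cycleType_def, Multiset.card_map]
  show ζ'.cycleFactorsFinset.card = ζ.cycleFactorsFinset.card
  exact le_antisymm (cycleFactors_card_le_swap hB' h1' h2')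
    (cycleFactors_card_le_swap hB h1 h2)

end BetheAux

namespace BetheAux
open Equiv Equiv.Perm Finset
open scoped Classical

variable {n : ℕ}

lemma pair_eq {a b c d : Fin n}
    (h : ∀ j : Fin n, ((if a = j then (1:ℝ) else 0) + if b = j then 1 else 0)
        = (if c = j then 1 else 0) + if d = j then 1 else 0) :
    (a = c ∧ b = d) ∨ (a = d ∧ b = c) := by
  by_cases hac : a = c
  · subst hac
    left
    refine ⟨rfl, ?_⟩
    by_contra hbd
    have hb := h b
    rw [if_pos rfl, if_neg (fun hh : d = b => hbd (hh.symm))] at hb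
    split_ifs at hb <;> norm_num at hb
  · right
    have ha := h a
    rw [if_pos rfl, if_neg (fun hh : c = a => hac (hh.symm))] at ha
    by_cases hda : d = a
    · rw [if_pos hda] at ha
      refine ⟨hda.symm, ?_⟩
      have hb := h b
      have hab : a ≠ b := by
        intro hh
        rw [if_pos hh.symm] at ha
        norm_num at ha
      rw [if_neg hab, if_pos rfl, if_neg (show d ≠ b by rw [hda]; exact hab)] at hb
      split_ifs at hb with hcb
      · exact hcb.symm
      · norm_num at hb
    · rw [if_neg hda] at ha
      split_ifs at ha <;> norm_num at ha

lemma fiber_cases {p q : Equiv.Perm (Fin n) × Equiv.Perm (Fin n)}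
    (h : fmat p = fmat q) (i : Fin n) :
    (p.1 i = q.1 i ∧ p.2 i = q.2 i) ∨ (p.1 i = q.2 i ∧ p.2 i = q.1 i) := by
  apply pair_eq
  intro j
  have h2 := congrFun (congrFun h i) j
  rw [fmat_apply, fmat_apply] at h2
  linarith

lemma mem_support_zeta {σ1 σ2 : Equiv.Perm (Fin n)} {a : Fin n} :
    a ∈ (σ2⁻¹ * σ1).support ↔ σ1 a ≠ σ2 a := by
  rw [Equiv.Perm.mem_support, Equiv.Perm.mul_apply]
  constructor
  · intro h hc
    apply h
    rw [hc]
    simp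
  · intro h hc
    apply h
    have := congrArg σ2 hc
    simpa using this

/-- The swap set of a fiber element. -/
def Bset (τ1 σ1 σ2 : Equiv.Perm (Fin n)) : Set (Fin n) :=
  {a | τ1 a = σ2 a ∧ σ1 a ≠ σ2 a}

section Fiber

variable {σ1 σ2 τ1 τ2 : Equiv.Perm (Fin n)}
  (hf : fmat (τ1, τ2) = fmat (σ1, σ2))

local notation "B" => Bset τ1 σ1 σ2
local notation "ζ" => σ2⁻¹ * σ1

include hf

lemma memB_vals {a : Fin n} (ha : a ∈ B) : τ1 a = σ2 a ∧ τ2 a = σ1 a := by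
  obtain ⟨h1, h2⟩ := ha
  refine ⟨h1, ?_⟩
  rcases fiber_cases hf a with ⟨hh1, hh2⟩ | ⟨hh1, hh2⟩
  · exact absurd (hh1.symm.trans h1) h2
  · exact hh2

lemma notB_vals {a : Fin n} (ha : a ∉ B) : τ1 a = σ1 a ∧ τ2 a = σ2 a := by
  rcases fiber_cases hf a with ⟨hh1, hh2⟩ | ⟨hh1, hh2⟩
  · exact ⟨hh1, hh2⟩
  · by_cases he : σ1 a = σ2 a
    · exact ⟨hh1.trans he.symm, hh2.trans he⟩
    · exact absurd ⟨hh1, he⟩ ha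

lemma B_invariant : ∀ a : Fin n, a ∈ B ↔ ζ a ∈ B := by
  have hBsup : ∀ a : Fin n, a ∈ B → a ∈ (ζ).support := fun a ha => mem_support_zeta.mpr ha.2
  have fwd : ∀ a : Fin n, a ∈ B → ζ a ∈ B := by
    intro a ha
    obtain ⟨h1, h2⟩ := memB_vals hf ha
    have hasup : a ∈ (ζ).support := hBsup a ha
    have hbsup : ζ a ∈ (ζ).support := Equiv.Perm.apply_mem_support.mpr hasup
    have hb2 : σ1 (ζ a) ≠ σ2 (ζ a) := mem_support_zeta.mp hbsup
    refine ⟨?_, hb2⟩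
    by_contra hc
    have hcases : (τ1 ((ζ) a) = σ1 ((ζ) a) ∧ τ2 ((ζ) a) = σ2 ((ζ) a)) ∨
        (τ1 ((ζ) a) = σ2 ((ζ) a) ∧ τ2 ((ζ) a) = σ1 ((ζ) a)) := by
      simpa using fiber_cases hf ((ζ) a)
    rcases hcases with ⟨hh1, hh2⟩ | ⟨hh1, hh2⟩
    · have e1 : σ2 ((ζ) a) = σ1 a := by
        simp [Equiv.Perm.mul_apply]
      have ht : τ2 ((ζ) a) = τ2 a := by rw [hh2, e1, ← h2]
      have heq := τ2.injective ht
      rw [Equiv.Perm.mem_support] at hasup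
      exact hasup heq
    · exact hc hh1
  intro a
  constructor
  · exact fwd a
  · intro hb
    by_contra ha
    by_cases hsup : a ∈ (ζ).support
    · obtain ⟨h1, h2⟩ := notB_vals hf ha
      obtain ⟨hb1, hb2⟩ := memB_vals hf hb
      have e1 : σ2 ((ζ) a) = σ1 a := by simp [Equiv.Perm.mul_apply]
      have : τ1 (ζ a) = τ1 a := by rw [hb1, e1, ← h1]
      have heq := τ1.injective this
      rw [Equiv.Perm.mem_support] at hsup
      exact hsup heq
    · rw [Equiv.Perm.notMem_support] at hsup
      rw [hsup] at hb
      exact ha hb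

lemma zeta_swap_on_B : ∀ a ∈ B, (τ2⁻¹ * τ1) a = (ζ)⁻¹ a := by
  intro a ha
  obtain ⟨h1, h2⟩ := memB_vals hf ha
  have hBinv : (ζ)⁻¹ a ∈ B := by
    have := (B_invariant hf ((ζ)⁻¹ a)).mpr
    apply this
    simpa using ha
  obtain ⟨g1, g2⟩ := memB_vals hf hBinv
  have key : τ2 ((ζ)⁻¹ a) = τ1 a := by
    rw [g2, h1]
    simp [Equiv.Perm.mul_apply]
  rw [Equiv.Perm.mul_apply]
  exact Equiv.Perm.inv_eq_iff_eq.mpr key.symm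

lemma zeta_swap_off_B : ∀ a : Fin n, a ∉ B → (τ2⁻¹ * τ1) a = (ζ) a := by
  intro a ha
  obtain ⟨h1, h2⟩ := notB_vals hf ha
  have hnB : (ζ) a ∉ B := fun hc => ha ((B_invariant hf a).mpr hc)
  obtain ⟨g1, g2⟩ := notB_vals hf hnB
  have key : τ2 ((ζ) a) = τ1 a := by
    rw [g2, h1]
    simp [Equiv.Perm.mul_apply]
  rw [Equiv.Perm.mul_apply]
  exact Equiv.Perm.inv_eq_iff_eq.mpr key.symm

lemma cycleType_card_fiber :
    Multiset.card (τ1 * τ2⁻¹).cycleType = Multiset.card (σ1 * σ2⁻¹).cycleType := by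
  have e1 : (τ1 * τ2⁻¹).cycleType = (τ2⁻¹ * τ1).cycleType := by
    rw [show τ2⁻¹ * τ1 = τ2⁻¹ * (τ1 * τ2⁻¹) * (τ2⁻¹)⁻¹ by group]
    rw [Equiv.Perm.cycleType_conj]
  have e2 : (σ1 * σ2⁻¹).cycleType = (σ2⁻¹ * σ1).cycleType := by
    rw [show σ2⁻¹ * σ1 = σ2⁻¹ * (σ1 * σ2⁻¹) * (σ2⁻¹)⁻¹ by group]
    rw [Equiv.Perm.cycleType_conj]
  rw [e1, e2]
  exact cycleType_card_swap (B_invariant hf) (zeta_swap_on_B hf) (zeta_swap_off_B hf)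

end Fiber

end BetheAux

namespace BetheAux
open Equiv Equiv.Perm Finset
open scoped Classical

variable {n : ℕ}

noncomputable def permOf (f : Fin n → Fin n) (hf : Function.Injective f) : Equiv.Perm (Fin n) :=
  Equiv.ofBijective f (Finite.injective_iff_bijective.mp hf)

@[simp] lemma permOf_apply (f : Fin n → Fin n) (hf : Function.Injective f) (i : Fin n) :
    permOf f hf i = f i := rfl

lemma Aset_invariant (σ1 σ2 : Equiv.Perm (Fin n)) {s : Finset (Equiv.Perm (Fin n))}
    (hs : s ⊆ (σ2⁻¹ * σ1).cycleFactorsFinset) :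
    ∀ a : Fin n, a ∈ s.sup Equiv.Perm.support ↔ (σ2⁻¹ * σ1) a ∈ s.sup Equiv.Perm.support := by
  intro a
  simp only [Finset.mem_sup]
  constructor
  · rintro ⟨c, hc, ha⟩
    exact ⟨c, hc, (mem_support_factor_iff (hs hc) a).mp ha⟩
  · rintro ⟨c, hc, ha⟩
    exact ⟨c, hc, (mem_support_factor_iff (hs hc) a).mpr ha⟩

lemma inv_invariant {σ1 σ2 : Equiv.Perm (Fin n)} {A : Finset (Fin n)}
    (hA : ∀ a, a ∈ A ↔ (σ2⁻¹ * σ1) a ∈ A) :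
    ∀ a, a ∈ A ↔ (σ2⁻¹ * σ1)⁻¹ a ∈ A := by
  intro a
  conv_lhs => rw [show a = (σ2⁻¹ * σ1) ((σ2⁻¹ * σ1)⁻¹ a) by simp]
  exact (hA _).symm

lemma inj_aux1 (σ1 σ2 : Equiv.Perm (Fin n)) {A : Finset (Fin n)}
    (hA : ∀ a, a ∈ A ↔ (σ2⁻¹ * σ1) a ∈ A) :
    Function.Injective (fun i => if i ∈ A then σ2 i else σ1 i) := by
  intro x y h
  dsimp only at h
  by_cases hx : x ∈ A <;> by_cases hy : y ∈ A
  · rw [if_pos hx, if_pos hy] at h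
    exact σ2.injective h
  · rw [if_pos hx, if_neg hy] at h
    exfalso
    apply hy
    have hyx : y = (σ2⁻¹ * σ1)⁻¹ x := by
      rw [mul_inv_rev]
      simp only [inv_inv, Equiv.Perm.mul_apply]
      rw [h]
      simp
    rw [hyx]
    exact (inv_invariant hA x).mp hx
  · rw [if_neg hx, if_pos hy] at h
    exfalso
    apply hx
    have hxy : x = (σ2⁻¹ * σ1)⁻¹ y := by
      rw [mul_inv_rev]
      simp only [inv_inv, Equiv.Perm.mul_apply]
      rw [← h]
      simp
    rw [hxy]
    exact (inv_invariant hA y).mp hy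
  · rw [if_neg hx, if_neg hy] at h
    exact σ1.injective h

lemma inj_aux2 (σ1 σ2 : Equiv.Perm (Fin n)) {A : Finset (Fin n)}
    (hA : ∀ a, a ∈ A ↔ (σ2⁻¹ * σ1) a ∈ A) :
    Function.Injective (fun i => if i ∈ A then σ1 i else σ2 i) := by
  intro x y h
  dsimp only at h
  by_cases hx : x ∈ A <;> by_cases hy : y ∈ A
  · rw [if_pos hx, if_pos hy] at h
    exact σ1.injective h
  · rw [if_pos hx, if_neg hy] at h
    exfalso
    apply hy
    have hyx : y = (σ2⁻¹ * σ1) x := by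
      simp only [Equiv.Perm.mul_apply]
      rw [h]
      simp
    rw [hyx]
    exact (hA x).mp hx
  · rw [if_neg hx, if_pos hy] at h
    exfalso
    apply hx
    have hxy : x = (σ2⁻¹ * σ1) y := by
      simp only [Equiv.Perm.mul_apply]
      rw [← h]
      simp
    rw [hxy]
    exact (hA y).mp hy
  · rw [if_neg hx, if_neg hy] at h
    exact σ2.injective h

/-- The inverse map of the fiber parametrization. -/
noncomputable def Phi (σ1 σ2 : Equiv.Perm (Fin n)) (s : Finset (Equiv.Perm (Fin n))) :
    Equiv.Perm (Fin n) × Equiv.Perm (Fin n) :=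
  if hA : ∀ a, a ∈ s.sup Equiv.Perm.support ↔ (σ2⁻¹ * σ1) a ∈ s.sup Equiv.Perm.support then
    (permOf _ (inj_aux1 σ1 σ2 hA), permOf _ (inj_aux2 σ1 σ2 hA))
  else (σ1, σ2)

lemma Phi_apply (σ1 σ2 : Equiv.Perm (Fin n)) {s : Finset (Equiv.Perm (Fin n))}
    (hs : s ⊆ (σ2⁻¹ * σ1).cycleFactorsFinset) (i : Fin n) :
    (Phi σ1 σ2 s).1 i = (if i ∈ s.sup Equiv.Perm.support then σ2 i else σ1 i) ∧
    (Phi σ1 σ2 s).2 i = (if i ∈ s.sup Equiv.Perm.support then σ1 i else σ2 i) := by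
  rw [Phi, dif_pos (Aset_invariant σ1 σ2 hs)]
  exact ⟨rfl, rfl⟩

lemma Phi_mem_fiber (σ1 σ2 : Equiv.Perm (Fin n)) {s : Finset (Equiv.Perm (Fin n))}
    (hs : s ⊆ (σ2⁻¹ * σ1).cycleFactorsFinset) :
    fmat (Phi σ1 σ2 s) = fmat (σ1, σ2) := by
  funext i j
  have h1 := (Phi_apply σ1 σ2 hs i).1
  have h2 := (Phi_apply σ1 σ2 hs i).2
  rw [fmat_apply, fmat_apply, h1, h2]
  by_cases hm : i ∈ s.sup Equiv.Perm.support
  · rw [if_pos hm, if_pos hm]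
    ring
  · rw [if_neg hm, if_neg hm]

lemma card_fiber (σ1 σ2 : Equiv.Perm (Fin n)) :
    (Finset.univ.filter fun p : Equiv.Perm (Fin n) × Equiv.Perm (Fin n) =>
      fmat p = fmat (σ1, σ2)).card = 2 ^ Multiset.card (σ2⁻¹ * σ1).cycleType := by
  classical
  rw [Equiv.Perm.cycleType_def, Multiset.card_map]
  rw [show Multiset.card (σ2⁻¹ * σ1).cycleFactorsFinset.val
      = (σ2⁻¹ * σ1).cycleFactorsFinset.card from rfl]
  rw [← Finset.card_powerset]
  refine Finset.card_bij'
    (i := fun p _ => (σ2⁻¹ * σ1).cycleFactorsFinset.filter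
      (fun c => ∀ a ∈ c.support, p.1 a = σ2 a ∧ σ1 a ≠ σ2 a))
    (j := fun s _ => Phi σ1 σ2 s) ?_ ?_ ?_ ?_
  · intro p _
    exact Finset.mem_powerset.mpr (Finset.filter_subset _ _)
  · intro s hs
    rw [Finset.mem_filter]
    exact ⟨Finset.mem_univ _, Phi_mem_fiber σ1 σ2 (Finset.mem_powerset.mp hs)⟩
  · -- left inverse : Phi (i p) = p
    intro p hp
    have hf : fmat (p.1, p.2) = fmat (σ1, σ2) := by
      have := (Finset.mem_filter.mp hp).2
      simpa using this
    set s' := (σ2⁻¹ * σ1).cycleFactorsFinset.filter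
      (fun c => ∀ a ∈ c.support, p.1 a = σ2 a ∧ σ1 a ≠ σ2 a) with hs'def
    have hs' : s' ⊆ (σ2⁻¹ * σ1).cycleFactorsFinset := Finset.filter_subset _ _
    have hAB : ∀ a : Fin n, a ∈ s'.sup Equiv.Perm.support ↔ (p.1 a = σ2 a ∧ σ1 a ≠ σ2 a) := by
      intro a
      constructor
      · intro ha
        obtain ⟨c, hc, hac⟩ := Finset.mem_sup.mp ha
        exact (Finset.mem_filter.mp hc).2 a hac
      · intro ha
        have hasupp : a ∈ (σ2⁻¹ * σ1).support := mem_support_zeta.mpr ha.2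
        have hc : (σ2⁻¹ * σ1).cycleOf a ∈ (σ2⁻¹ * σ1).cycleFactorsFinset :=
          Equiv.Perm.cycleOf_mem_cycleFactorsFinset_iff.mpr hasupp
        have hac : a ∈ ((σ2⁻¹ * σ1).cycleOf a).support :=
          Equiv.Perm.mem_support_cycleOf_iff.mpr ⟨Equiv.Perm.SameCycle.refl _ _, hasupp⟩
        have hsub : ∀ b ∈ ((σ2⁻¹ * σ1).cycleOf a).support, b ∈ Bset p.1 σ1 σ2 :=
          support_subset_of_invariant hc (B_invariant hf) hac ha
        apply Finset.mem_sup.mpr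
        exact ⟨(σ2⁻¹ * σ1).cycleOf a, Finset.mem_filter.mpr ⟨hc, fun b hb => hsub b hb⟩, hac⟩
    have key1 : ∀ i : Fin n, (Phi σ1 σ2 s').1 i = p.1 i := by
      intro i
      rw [(Phi_apply σ1 σ2 hs' i).1]
      by_cases hm : i ∈ s'.sup Equiv.Perm.support
      · rw [if_pos hm]
        exact ((memB_vals hf ((hAB i).mp hm)).1).symm
      · rw [if_neg hm]
        exact ((notB_vals hf (fun hx => hm ((hAB i).mpr hx))).1).symm
    have key2 : ∀ i : Fin n, (Phi σ1 σ2 s').2 i = p.2 i := by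
      intro i
      rw [(Phi_apply σ1 σ2 hs' i).2]
      by_cases hm : i ∈ s'.sup Equiv.Perm.support
      · rw [if_pos hm]
        exact ((memB_vals hf ((hAB i).mp hm)).2).symm
      · rw [if_neg hm]
        exact ((notB_vals hf (fun hx => hm ((hAB i).mpr hx))).2).symm
    have heq : Phi σ1 σ2 s' = (p.1, p.2) :=
      Prod.ext (Equiv.ext key1) (Equiv.ext key2)
    rw [heq]
  · -- right inverse : i (Phi s) = s
    intro s hs
    have hsC : s ⊆ (σ2⁻¹ * σ1).cycleFactorsFinset := Finset.mem_powerset.mp hs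
    ext c
    rw [Finset.mem_filter]
    constructor
    · rintro ⟨hcC, hpred⟩
      have hcyc := (Equiv.Perm.mem_cycleFactorsFinset_iff.mp hcC).1
      obtain ⟨a, ha⟩ := hcyc.nonempty_support
      obtain ⟨hv, hne⟩ := hpred a ha
      rw [(Phi_apply σ1 σ2 hsC a).1] at hv
      have hmA : a ∈ s.sup Equiv.Perm.support := by
        by_contra hmem
        rw [if_neg hmem] at hv
        exact hne hv
      obtain ⟨c', hc's, hac'⟩ := Finset.mem_sup.mp hmA
      have e1 : c = (σ2⁻¹ * σ1).cycleOf a := Equiv.Perm.cycle_is_cycleOf ha hcC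
      have e2 : c' = (σ2⁻¹ * σ1).cycleOf a := Equiv.Perm.cycle_is_cycleOf hac' (hsC hc's)
      rw [e1, ← e2]
      exact hc's
    · intro hcs
      refine ⟨hsC hcs, fun a ha => ?_⟩
      have hmA : a ∈ s.sup Equiv.Perm.support := Finset.mem_sup.mpr ⟨c, hcs, ha⟩
      have hsupp : a ∈ (σ2⁻¹ * σ1).support :=
        Equiv.Perm.mem_cycleFactorsFinset_support_le (hsC hcs) ha
      refine ⟨?_, mem_support_zeta.mp hsupp⟩
      rw [(Phi_apply σ1 σ2 hsC a).1, if_pos hmA]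

end BetheAux

namespace BetheAux
open Equiv Equiv.Perm Finset
open scoped Classical

variable {n : ℕ}

lemma sum_ite_perm (σ : Equiv.Perm (Fin n)) (j : Fin n) (x : ℝ) :
    ∑ i, (if σ i = j then x else 0) = x := by
  have key : ∀ i, (if σ i = j then x else 0) = (if i = σ⁻¹ j then x else 0) := by
    intro i
    by_cases h : σ i = j
    · rw [if_pos h, if_pos (by rw [← h]; simp)]
    · rw [if_neg h, if_neg (fun hh => h (by rw [hh]; simp))]
  rw [Finset.sum_congr rfl (fun i _ => key i)]
  simp

lemma fmat_memGamma (p : Equiv.Perm (Fin n) × Equiv.Perm (Fin n)) : MemGamma 2 (fmat p) := by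
  refine ⟨⟨?_, ?_, ?_⟩, ?_⟩
  · intro i j
    rw [fmat_apply]
    split_ifs <;> norm_num
  · intro i
    simp only [fmat_apply]
    rw [← Finset.sum_div, Finset.sum_add_distrib]
    simp
  · intro j
    simp only [fmat_apply]
    rw [← Finset.sum_div, Finset.sum_add_distrib, sum_ite_perm p.1 j 1, sum_ite_perm p.2 j 1]
    norm_num
  · intro i j
    refine ⟨(if p.1 i = j then 1 else 0) + (if p.2 i = j then 1 else 0), ?_⟩
    rw [fmat_apply]
    push_cast
    split_ifs <;> norm_num

lemma memGamma_decomp {γ : Matrix (Fin n) (Fin n) ℝ} (hγ : MemGamma 2 γ) :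
    ∃ p : Equiv.Perm (Fin n) × Equiv.Perm (Fin n), fmat p = γ := by
  classical
  obtain ⟨⟨hpos, hrow, hcol⟩, hk⟩ := hγ
  set t : Fin n → Finset (Fin n) := fun i => univ.filter (fun j => 0 < γ i j) with ht
  have hall : ∀ s : Finset (Fin n), s.card ≤ (s.biUnion t).card := by
    intro s
    have key : (s.card : ℝ) ≤ ((s.biUnion t).card : ℝ) := by
      have h1 : ∀ i ∈ s, ∑ j ∈ s.biUnion t, γ i j = 1 := by
        intro i hi
        rw [← hrow i]
        apply Finset.sum_subset (Finset.subset_univ _)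
        intro j _ hj
        by_contra hne
        have hlt : 0 < γ i j := lt_of_le_of_ne (hpos i j) (Ne.symm hne)
        exact hj (Finset.mem_biUnion.mpr ⟨i, hi,
          Finset.mem_filter.mpr ⟨Finset.mem_univ _, hlt⟩⟩)
      calc (s.card : ℝ) = ∑ i ∈ s, ∑ j ∈ s.biUnion t, γ i j := by
            rw [Finset.sum_congr rfl h1]; simp
        _ = ∑ j ∈ s.biUnion t, ∑ i ∈ s, γ i j := Finset.sum_comm
        _ ≤ ∑ j ∈ s.biUnion t, ∑ i ∈ univ, γ i j := by
            apply Finset.sum_le_sum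
            intro j _
            exact Finset.sum_le_sum_of_subset_of_nonneg (Finset.subset_univ _)
              (fun i _ _ => hpos i j)
        _ = ((s.biUnion t).card : ℝ) := by
            rw [Finset.sum_congr rfl (fun j _ => hcol j)]; simp
    exact_mod_cast key
  obtain ⟨g, hginj, hgt⟩ := (Finset.all_card_le_biUnion_card_iff_exists_injective t).mp hall
  have hgpos : ∀ i, 0 < γ i (g i) := by
    intro i
    have := hgt i
    rw [ht] at this
    exact (Finset.mem_filter.mp this).2
  set σ1 := permOf g hginj with hσ1
  have hhalf : ∀ i j, γ i j = 0 ∨ γ i j = 1/2 ∨ γ i j = 1 := by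
    intro i j
    obtain ⟨k, hk'⟩ := hk i j
    have h1 : γ i j ≤ 1 := by
      calc γ i j ≤ ∑ j', γ i j' :=
            Finset.single_le_sum (fun j' _ => hpos i j') (Finset.mem_univ j)
        _ = 1 := hrow i
    have hk2 : (k:ℝ) ≤ 2 := by
      rw [hk'] at h1
      push_cast at h1 ⊢
      linarith
    have hkle : k ≤ 2 := by exact_mod_cast hk2
    interval_cases k <;> rw [hk'] <;> norm_num
  have hge : ∀ i, 1/2 ≤ γ i (σ1 i) := by
    intro i
    have hp := hgpos i
    have : σ1 i = g i := rfl
    rw [← this] at hp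
    rcases hhalf i (σ1 i) with h | h | h
    · rw [h] at hp; norm_num at hp
    · rw [h]
    · rw [h]; norm_num
  set γ' : Matrix (Fin n) (Fin n) ℝ := fun i j => γ i j - if σ1 i = j then 1/2 else 0 with hγ'
  have hγ'pos : ∀ i j, 0 ≤ γ' i j := by
    intro i j
    rw [hγ']
    dsimp only
    split_ifs with h
    · rw [← h]
      have := hge i
      linarith
    · linarith [hpos i j]
  have hrow' : ∀ i, ∑ j, γ' i j = 1/2 := by
    intro i
    rw [hγ']
    dsimp only
    rw [Finset.sum_sub_distrib, hrow i]
    simp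
    norm_num
  have hcol' : ∀ j, ∑ i, γ' i j = 1/2 := by
    intro j
    rw [hγ']
    dsimp only
    rw [Finset.sum_sub_distrib, hcol j, sum_ite_perm σ1 j (1/2)]
    norm_num
  have hupper' : ∀ i j, γ' i j ≤ 1/2 := by
    intro i j
    calc γ' i j ≤ ∑ j', γ' i j' :=
          Finset.single_le_sum (fun j' _ => hγ'pos i j') (Finset.mem_univ j)
      _ = 1/2 := hrow' i
  have hvals : ∀ i j, γ' i j = 0 ∨ γ' i j = 1/2 := by
    intro i j
    by_cases h : σ1 i = j
    · rcases hhalf i j with h0 | hh | h1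
      · exfalso
        have := hge i
        rw [h, h0] at this
        norm_num at this
      · left; rw [hγ']; dsimp only; rw [if_pos h, hh]; ring
      · right; rw [hγ']; dsimp only; rw [if_pos h, h1]; norm_num
    · rcases hhalf i j with h0 | hh | h1
      · left; rw [hγ']; dsimp only; rw [if_neg h, h0]; norm_num
      · right; rw [hγ']; dsimp only; rw [if_neg h, hh]; norm_num
      · exfalso
        have := hupper' i j
        rw [hγ'] at this
        dsimp only at this
        rw [if_neg h, h1] at this
        norm_num at this
  have hex : ∀ i, ∃ j, γ' i j = 1/2 := by
    intro i
    by_contra hno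
    push_neg at hno
    have hz : ∑ j, γ' i j = 0 :=
      Finset.sum_eq_zero (fun j _ => (hvals i j).resolve_right (hno j))
    rw [hrow' i] at hz
    norm_num at hz
  set h2 : Fin n → Fin n := fun i => Classical.choose (hex i) with hh2
  have hval : ∀ i, γ' i (h2 i) = 1/2 := fun i => Classical.choose_spec (hex i)
  have hinj : Function.Injective h2 := by
    intro x y hxy
    by_contra hne
    have hle : γ' x (h2 x) + γ' y (h2 x) ≤ ∑ i, γ' i (h2 x) := by
      have hs := Finset.sum_le_sum_of_subset_of_nonneg (f := fun i => γ' i (h2 x))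
        (Finset.subset_univ ({x, y} : Finset (Fin n))) (fun i _ _ => hγ'pos i (h2 x))
      rwa [Finset.sum_pair hne] at hs
    rw [hcol' (h2 x)] at hle
    have h1 := hval x
    have h2' := hval y
    rw [← hxy] at h2'
    linarith
  set σ2 := permOf h2 hinj with hσ2
  have hrest : ∀ i j, j ≠ h2 i → γ' i j = 0 := by
    intro i j hne
    rcases hvals i j with h | h
    · exact h
    · exfalso
      have hle : γ' i j + γ' i (h2 i) ≤ ∑ j', γ' i j' := by
        have hs := Finset.sum_le_sum_of_subset_of_nonneg (f := fun j' => γ' i j')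
          (Finset.subset_univ ({j, h2 i} : Finset (Fin n))) (fun j' _ _ => hγ'pos i j')
        rwa [Finset.sum_pair hne] at hs
      rw [hrow' i] at hle
      have := hval i
      linarith
  refine ⟨(σ1, σ2), ?_⟩
  funext i j
  rw [fmat_apply]
  have hdec : γ i j = γ' i j + (if σ1 i = j then 1/2 else 0) := by
    rw [hγ']; dsimp only; ring
  have hγ'' : γ' i j = (if σ2 i = j then 1/2 else 0) := by
    by_cases h : σ2 i = j
    · rw [if_pos h, ← h]
      exact hval i
    · rw [if_neg h]
      exact hrest i j (fun hh => h hh.symm)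
  show ((if σ1 i = j then (1:ℝ) else 0) + if σ2 i = j then 1 else 0) / 2 = γ i j
  rw [hdec, hγ'']
  split_ifs <;> norm_num

lemma set_eq :
    {γ : Matrix (Fin n) (Fin n) ℝ | MemGamma 2 γ}
      = ↑(Finset.image fmat (Finset.univ :
          Finset (Equiv.Perm (Fin n) × Equiv.Perm (Fin n)))) := by
  ext γ
  simp only [Set.mem_setOf_eq, Finset.coe_image, Finset.coe_univ, Set.image_univ,
    Set.mem_range]
  constructor
  · intro h
    exact memGamma_decomp h
  · rintro ⟨p, rfl⟩
    exact fmat_memGamma p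

end BetheAux

namespace BetheAux
open Equiv Equiv.Perm Finset
open scoped Classical

variable {n : ℕ}

lemma cycleType_card_conj (σ1 σ2 : Equiv.Perm (Fin n)) :
    Multiset.card (σ2⁻¹ * σ1).cycleType = Multiset.card (σ1 * σ2⁻¹).cycleType := by
  rw [show σ2⁻¹ * σ1 = σ2⁻¹ * (σ1 * σ2⁻¹) * (σ2⁻¹)⁻¹ by group, Equiv.Perm.cycleType_conj]

lemma sum_main (θ : Matrix (Fin n) (Fin n) ℝ) :
    (∑ᶠ γ ∈ {γ : Matrix (Fin n) (Fin n) ℝ | MemGamma 2 γ}, matPow 2 θ γ * CB 2 γ)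
      = ∑ p : Equiv.Perm (Fin n) × Equiv.Perm (Fin n),
          (∏ i, θ i (p.1 i)) * (∏ i, θ i (p.2 i)) *
            ((2:ℝ) ^ (Multiset.card (p.1 * p.2⁻¹).cycleType))⁻¹ := by
  classical
  rw [set_eq, finsum_mem_coe_finset]
  rw [← Finset.sum_fiberwise_of_maps_to (g := fmat)
    (t := Finset.image fmat (Finset.univ : Finset (Equiv.Perm (Fin n) × Equiv.Perm (Fin n))))
    (fun p _ => Finset.mem_image_of_mem fmat (Finset.mem_univ p))]
  refine Finset.sum_congr rfl fun γ hγ => ?_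
  obtain ⟨q, -, hq⟩ := Finset.mem_image.mp hγ
  have hconst : ∀ p ∈ Finset.univ.filter
      (fun p : Equiv.Perm (Fin n) × Equiv.Perm (Fin n) => fmat p = γ),
      (∏ i, θ i (p.1 i)) * (∏ i, θ i (p.2 i)) *
          ((2:ℝ) ^ (Multiset.card (p.1 * p.2⁻¹).cycleType))⁻¹
        = matPow 2 θ γ * ((2:ℝ) ^ (Multiset.card (q.1 * q.2⁻¹).cycleType))⁻¹ := by
    intro p hp
    have hpf : fmat p = γ := (Finset.mem_filter.mp hp).2
    have hff : fmat (p.1, p.2) = fmat (q.1, q.2) := by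
      simpa using hpf.trans hq.symm
    have hc := cycleType_card_fiber hff
    rw [← matPow_fmat θ p, hpf, hc]
  rw [Finset.sum_congr rfl hconst, Finset.sum_const]
  have hcard : (Finset.univ.filter
      (fun p : Equiv.Perm (Fin n) × Equiv.Perm (Fin n) => fmat p = γ)).card
      = 2 ^ (Multiset.card (q.1 * q.2⁻¹).cycleType) := by
    have h1 : (Finset.univ.filter
        (fun p : Equiv.Perm (Fin n) × Equiv.Perm (Fin n) => fmat p = fmat (q.1, q.2))).card
        = 2 ^ (Multiset.card (q.2⁻¹ * q.1).cycleType) := card_fiber q.1 q.2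
    rw [cycleType_card_conj] at h1
    rw [← h1]
    congr 2
    funext p
    rw [show fmat (q.1, q.2) = γ by simpa using hq]
  rw [hcard]
  have hCB : CB 2 γ = 1 := by
    rw [← hq]
    exact CB_fmat q
  rw [hCB, mul_one, nsmul_eq_mul]
  push_cast
  rw [← mul_assoc, mul_comm ((2:ℝ) ^ Multiset.card (q.1 * q.2⁻¹).cycleType) (matPow 2 θ γ),
    mul_assoc, mul_inv_cancel₀ (by positivity), mul_one]

end BetheAux

theorem perm_div_degree_two_bethe {n : ℕ}
    (θ : Matrix (Fin n) (Fin n) ℝ) (hθ : ∀ i j, 0 ≤ θ i j) (hperm : 0 < perm θ) :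
    perm θ /
        (∑ᶠ γ ∈ {γ : Matrix (Fin n) (Fin n) ℝ | MemGamma 2 γ},
            matPow 2 θ γ * CB 2 γ) ^ ((1 : ℝ) / 2)
      = (∑ σ₁ : Equiv.Perm (Fin n), ∑ σ₂ : Equiv.Perm (Fin n),
            pTheta θ σ₁ * pTheta θ σ₂ *
              ((2 : ℝ) ^ ((σ₁ * σ₂⁻¹).cycleType.card))⁻¹) ^ (-(1 : ℝ) / 2) := by
  classical
  have hS := BetheAux.sum_main θ
  set T : ℝ := ∑ p : Equiv.Perm (Fin n) × Equiv.Perm (Fin n),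
      (∏ i, θ i (p.1 i)) * (∏ i, θ i (p.2 i)) *
        ((2:ℝ) ^ (Multiset.card (p.1 * p.2⁻¹).cycleType))⁻¹ with hTdef
  -- positivity of T
  have hex : ∃ σ : Equiv.Perm (Fin n), 0 < ∏ i, θ i (σ i) := by
    by_contra h
    push_neg at h
    have hz : ∀ σ : Equiv.Perm (Fin n), (∏ i, θ i (σ i)) = 0 :=
      fun σ => le_antisymm (h σ) (Finset.prod_nonneg fun i _ => hθ i _)
    have : perm θ = 0 := by
      rw [perm]
      exact Finset.sum_eq_zero fun σ _ => hz σ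
    rw [this] at hperm
    exact lt_irrefl _ hperm
  obtain ⟨σ0, hσ0⟩ := hex
  have hTpos : 0 < T := by
    rw [hTdef]
    apply Finset.sum_pos'
    · intro p _
      have h1 : (0:ℝ) ≤ ∏ i, θ i (p.1 i) := Finset.prod_nonneg fun i _ => hθ i _
      have h2 : (0:ℝ) ≤ ∏ i, θ i (p.2 i) := Finset.prod_nonneg fun i _ => hθ i _
      positivity
    · refine ⟨(σ0, σ0), Finset.mem_univ _, ?_⟩
      have : (0:ℝ) < ((2:ℝ) ^ (Multiset.card ((σ0 * σ0⁻¹).cycleType)))⁻¹ := by positivity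
      exact mul_pos (mul_pos hσ0 hσ0) this
  -- rewrite RHS double sum
  have hR : (∑ σ₁ : Equiv.Perm (Fin n), ∑ σ₂ : Equiv.Perm (Fin n),
      pTheta θ σ₁ * pTheta θ σ₂ * ((2 : ℝ) ^ ((σ₁ * σ₂⁻¹).cycleType.card))⁻¹)
      = T / (perm θ)^2 := by
    have hterm : ∀ σ₁ σ₂ : Equiv.Perm (Fin n),
        pTheta θ σ₁ * pTheta θ σ₂ * ((2 : ℝ) ^ ((σ₁ * σ₂⁻¹).cycleType.card))⁻¹
          = ((∏ i, θ i (σ₁ i)) * (∏ i, θ i (σ₂ i)) *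
              ((2:ℝ) ^ (Multiset.card (σ₁ * σ₂⁻¹).cycleType))⁻¹) / (perm θ)^2 := by
      intro σ₁ σ₂
      rw [pTheta, pTheta]
      ring
    rw [Finset.sum_congr rfl fun σ₁ _ => Finset.sum_congr rfl fun σ₂ _ => hterm σ₁ σ₂]
    simp only [← Finset.sum_div]
    congr 1
    rw [hTdef, Fintype.sum_prod_type]
  rw [hS, hR]
  have hsq : ((perm θ)^2 : ℝ) ^ ((1:ℝ)/2) = perm θ := by
    rw [← Real.rpow_natCast (perm θ) 2, ← Real.rpow_mul hperm.le]
    norm_num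
  rw [show (-(1:ℝ))/2 = -((1:ℝ)/2) by norm_num]
  rw [Real.rpow_neg (div_nonneg hTpos.le (by positivity))]
  rw [Real.div_rpow hTpos.le (by positivity), hsq, inv_div]
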